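/- Let μ₀ be a probability measure on (-∞,0] with δ_r(μ₀) < ∞ and let α₁, α₂ ≥ 0 with α₁ + α₂δ_r(μ₀) < 1. Suppose G : C_r → ℝ^d satisfies |G(ξ)|² ≤ α₁|ξ(0)|² + α₂∫_{-∞}^0 |ξ(θ)|² μ₀(dθ). Let X : ℝ → ℝ^d be continuous with X_0 ∈ C_r and set Λ^X(s) = X(s) - G(X_s). Then with β₁ := (1 + √(α₁ + α₂δ_r(μ₀)))², there exists a constant c₁ > 0 (depending on α₁, α₂, δ_r(μ₀)) such that for all t ≥ 0: ∫_0^t e^{2rs}|Λ^X(s)|² ds ≤ c₁‖X_0‖_r² t + β₁ ∫_0^t e^{2rs}|X(s)|² ds. -/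

import Mathlib

open MeasureTheory intervalIntegral

set_option maxHeartbeats 1600000 in
theorem stmt_10 (d : ℕ) (r α₁ α₂ : ℝ) (hr : 0 < r) (hα₁ : 0 ≤ α₁) (hα₂ : 0 ≤ α₂)
    (μ₀ : Measure ℝ) [IsProbabilityMeasure μ₀] (hsupp : μ₀ (Set.Ioi 0) = 0)
    (δ : ℝ) (hδ : δ = ∫ θ, Real.exp (-2 * r * θ) ∂μ₀)
    (hδint : Integrable (fun θ => Real.exp (-2 * r * θ)) μ₀)
    (hsmall : α₁ + α₂ * δ < 1)
    (G : (ℝ → EuclideanSpace ℝ (Fin d)) → EuclideanSpace ℝ (Fin d))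
    (hG : ∀ ξ : ℝ → EuclideanSpace ℝ (Fin d),
      ‖G ξ‖ ^ 2 ≤ α₁ * ‖ξ 0‖ ^ 2 + α₂ * ∫ θ, ‖ξ θ‖ ^ 2 ∂μ₀)
    (X : ℝ → EuclideanSpace ℝ (Fin d)) (hX : Continuous X)
    (N : ℝ) (hN : ∀ θ : ℝ, θ ≤ 0 → Real.exp (r * θ) * ‖X θ‖ ≤ N)
    (β₁ : ℝ) (hβ₁ : β₁ = (1 + Real.sqrt (α₁ + α₂ * δ)) ^ 2) :
    ∃ c₁ : ℝ, 0 < c₁ ∧ ∀ t : ℝ, 0 ≤ t →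
      ∫ s in (0:ℝ)..t, Real.exp (2 * r * s) * ‖X s - G (fun θ => X (s + θ))‖ ^ 2
        ≤ c₁ * N ^ 2 * t
          + β₁ * ∫ s in (0:ℝ)..t, Real.exp (2 * r * s) * ‖X s‖ ^ 2 := by
  -- basic facts
  have hN0 : 0 ≤ N := le_trans (by positivity) (hN 0 le_rfl)
  have hae0 : ∀ᵐ θ ∂μ₀, θ ≤ 0 := by
    rw [ae_iff]
    convert hsupp using 2
    ext θ; simp [Set.mem_Ioi, not_le]
  have hδ1 : (1:ℝ) ≤ δ := by
    rw [hδ]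
    calc (1:ℝ) = ∫ _, (1:ℝ) ∂μ₀ := by simp
    _ ≤ ∫ θ, Real.exp (-2 * r * θ) ∂μ₀ := by
        refine integral_mono_ae (integrable_const 1) hδint ?_
        filter_upwards [hae0] with θ hθ
        have : (0:ℝ) ≤ -2 * r * θ := by nlinarith
        simpa using Real.one_le_exp this
  have hδ0 : (0:ℝ) < δ := lt_of_lt_of_le one_pos hδ1
  -- the weight function φ
  set φ : ℝ → ℝ := fun u => Real.exp (2 * r * u) * ‖X u‖ ^ 2 with hφdef
  have hφcont : Continuous φ := by
    apply Continuous.mul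
    · exact Real.continuous_exp.comp (continuous_const.mul continuous_id)
    · exact (hX.norm).pow 2
  have hφnn : ∀ u, 0 ≤ φ u := fun u => by positivity
  have hφle : ∀ u, u ≤ 0 → φ u ≤ N ^ 2 := by
    intro u hu
    have h := hN u hu
    have he : Real.exp (2 * r * u) = Real.exp (r * u) ^ 2 := by
      rw [sq, ← Real.exp_add]; ring_nf
    have : φ u = (Real.exp (r * u) * ‖X u‖) ^ 2 := by
      rw [hφdef]; simp only []; rw [mul_pow, he]
    rw [this]
    exact pow_le_pow_left₀ (by positivity) h 2
  set ε : ℝ := Real.sqrt (α₁ + α₂ * δ) with hεdef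
  have hεnn : 0 ≤ ε := Real.sqrt_nonneg _
  have hsumnn : 0 ≤ α₁ + α₂ * δ := by nlinarith
  have hε2 : ε ^ 2 = α₁ + α₂ * δ := Real.sq_sqrt hsumnn
  rcases eq_or_lt_of_le hεnn with hε0 | hεpos
  · -- degenerate case: α₁ = α₂ = 0, G ≡ 0
    have hsum0 : α₁ + α₂ * δ = 0 := by rw [← hε2, ← hε0]; ring
    have hα₁0 : α₁ = 0 := by nlinarith
    have hα₂0 : α₂ = 0 := by nlinarith
    have hβ1 : β₁ = 1 := by rw [hβ₁, ← hε0]; ring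
    have hG0 : ∀ ξ, G ξ = 0 := by
      intro ξ
      have h := hG ξ
      rw [hα₁0, hα₂0] at h
      simp only [zero_mul, add_zero] at h
      have : ‖G ξ‖ ^ 2 = 0 := le_antisymm h (by positivity)
      have : ‖G ξ‖ = 0 := by nlinarith [norm_nonneg (G ξ)]
      exact norm_eq_zero.mp this
    refine ⟨1, one_pos, fun t ht => ?_⟩
    simp only [hG0, sub_zero, hβ1, one_mul]
    nlinarith [sq_nonneg N]
  · -- main case
    refine ⟨(1 + 1/ε) * α₂ * δ + 1, by positivity, fun t ht => ?_⟩
    set I : ℝ := ∫ s in (0:ℝ)..t, Real.exp (2 * r * s) * ‖X s‖ ^ 2 with hIdef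
    have hI0 : 0 ≤ I :=
      intervalIntegral.integral_nonneg ht (fun u _ => by positivity)
    have hβ₁0 : 0 ≤ β₁ := by rw [hβ₁]; positivity
    by_cases hInt : IntervalIntegrable
        (fun s => Real.exp (2 * r * s) * ‖X s - G (fun θ => X (s + θ))‖ ^ 2) volume 0 t
    swap
    · rw [intervalIntegral.integral_undef hInt]
      have h1 : 0 ≤ ((1 + 1/ε) * α₂ * δ + 1) * N ^ 2 * t := by positivity
      nlinarith [mul_nonneg hβ₁0 hI0]
    -- the kernel F
    set F : ℝ → ℝ → ℝ := fun s θ => Real.exp (2 * r * s) * ‖X (s + θ)‖ ^ 2 with hFdef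
    have hFeq : ∀ s θ, F s θ = Real.exp (-2 * r * θ) * φ (s + θ) := by
      intro s θ
      show Real.exp (2 * r * s) * ‖X (s + θ)‖ ^ 2
        = Real.exp (-2 * r * θ) * (Real.exp (2 * r * (s + θ)) * ‖X (s + θ)‖ ^ 2)
      rw [← mul_assoc, ← Real.exp_add]
      have harg : -2 * r * θ + 2 * r * (s + θ) = 2 * r * s := by ring
      rw [harg]
    have hFcont : Continuous (fun p : ℝ × ℝ => F p.1 p.2) := by
      apply Continuous.mul
      · exact Real.continuous_exp.comp (continuous_const.mul continuous_fst)
      · exact ((hX.comp (continuous_fst.add continuous_snd)).norm).pow 2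
    -- uniform bound on [0,t]
    obtain ⟨M, hM⟩ : ∃ M, ∀ u ∈ Set.Icc (0:ℝ) t, φ u ≤ M := by
      obtain ⟨M, hM'⟩ := isCompact_Icc.exists_bound_of_continuousOn
        (hφcont.continuousOn (s := Set.Icc 0 t))
      exact ⟨M, fun u hu => le_trans (le_abs_self _) (by simpa [Real.norm_eq_abs] using hM' u hu)⟩
    set C : ℝ := max (N ^ 2) M with hCdef
    have hC0 : 0 ≤ C := le_trans (sq_nonneg N) (le_max_left _ _)
    have hφC : ∀ s ∈ Set.Ioc (0:ℝ) t, ∀ θ : ℝ, θ ≤ 0 → F s θ ≤ Real.exp (-2 * r * θ) * C := by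
      intro s hs θ hθ
      rw [hFeq]
      have : φ (s + θ) ≤ C := by
        rcases le_or_gt (s + θ) 0 with h | h
        · exact le_trans (hφle _ h) (le_max_left _ _)
        · refine le_trans (hM (s + θ) ⟨h.le, by linarith [hs.2]⟩) (le_max_right _ _)
      exact mul_le_mul_of_nonneg_left this (Real.exp_pos _).le
    -- product integrability
    have hprodae1 : ∀ᵐ p : ℝ × ℝ ∂((volume.restrict (Set.Ioc 0 t)).prod μ₀),
        p.1 ∈ Set.Ioc (0:ℝ) t :=
      Measure.quasiMeasurePreserving_fst.ae (ae_restrict_mem measurableSet_Ioc)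
    have hprodae2 : ∀ᵐ p : ℝ × ℝ ∂((volume.restrict (Set.Ioc 0 t)).prod μ₀),
        p.2 ≤ 0 :=
      Measure.quasiMeasurePreserving_snd.ae hae0
    have hFint : Integrable (fun p : ℝ × ℝ => F p.1 p.2)
        ((volume.restrict (Set.Ioc 0 t)).prod μ₀) := by
      refine Integrable.mono
        (g := fun p : ℝ × ℝ => (fun _ : ℝ => (1:ℝ)) p.1 * (Real.exp (-2 * r * p.2) * C))
        ?_ hFcont.aestronglyMeasurable ?_
      · exact Integrable.mul_prod
          (integrableOn_const (C := (1:ℝ)) measure_Ioc_lt_top.ne) (hδint.mul_const C)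
      · filter_upwards [hprodae1, hprodae2] with p hp1 hp2
        have h1 := hφC p.1 hp1 p.2 hp2
        have h2 : 0 ≤ F p.1 p.2 := by rw [hFdef]; positivity
        rw [Real.norm_eq_abs, Real.norm_eq_abs, abs_of_nonneg h2, one_mul,
          abs_of_nonneg (by positivity)]
        exact h1
    -- the inner bound for fixed θ ≤ 0
    have hinner : ∀ θ : ℝ, θ ≤ 0 →
        (∫ s in Set.Ioc (0:ℝ) t, F s θ) ≤ Real.exp (-2 * r * θ) * (N ^ 2 * t + I) := by
      intro θ hθ
      have hIoc : (∫ s in Set.Ioc (0:ℝ) t, F s θ) = ∫ s in (0:ℝ)..t, F s θ :=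
        (intervalIntegral.integral_of_le ht).symm
      rw [hIoc]
      have h1 : (∫ s in (0:ℝ)..t, F s θ)
          = Real.exp (-2 * r * θ) * ∫ s in (0:ℝ)..t, φ (s + θ) := by
        rw [← intervalIntegral.integral_const_mul]
        exact intervalIntegral.integral_congr (fun s _ => hFeq s θ)
      rw [h1]
      refine mul_le_mul_of_nonneg_left ?_ (Real.exp_pos _).le
      have h2 : (∫ s in (0:ℝ)..t, φ (s + θ)) = ∫ u in θ..(t + θ), φ u := by
        rw [intervalIntegral.integral_comp_add_right φ θ, zero_add]
      rw [h2]
      have hInt1 : ∀ a b : ℝ, IntervalIntegrable φ volume a b :=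
        fun a b => hφcont.intervalIntegrable a b
      rcases le_or_gt (t + θ) 0 with hc | hc
      · have hb : (∫ u in θ..(t + θ), φ u) ≤ ∫ u in θ..(t + θ), (N ^ 2 : ℝ) := by
          refine intervalIntegral.integral_mono_on (by linarith) (hInt1 _ _)
            (intervalIntegrable_const) ?_
          intro u hu
          exact hφle u (le_trans hu.2 hc)
        rw [intervalIntegral.integral_const] at hb
        have : ((t + θ) - θ) • (N ^ 2 : ℝ) = t * N ^ 2 := by
          rw [smul_eq_mul]; ring
        rw [this] at hb
        nlinarith
      · have hsplit : (∫ u in θ..(0:ℝ), φ u) + ∫ u in (0:ℝ)..(t + θ), φ u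
            = ∫ u in θ..(t + θ), φ u :=
          intervalIntegral.integral_add_adjacent_intervals (hInt1 _ _) (hInt1 _ _)
        have hb1 : (∫ u in θ..(0:ℝ), φ u) ≤ t * N ^ 2 := by
          have : (∫ u in θ..(0:ℝ), φ u) ≤ ∫ u in θ..(0:ℝ), (N ^ 2 : ℝ) := by
            refine intervalIntegral.integral_mono_on hθ (hInt1 _ _)
              (intervalIntegrable_const) ?_
            intro u hu; exact hφle u hu.2
          rw [intervalIntegral.integral_const, smul_eq_mul] at this
          nlinarith
        have hb2 : (∫ u in (0:ℝ)..(t + θ), φ u) ≤ I := by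
          rw [hIdef]
          exact intervalIntegral.integral_mono_interval le_rfl hc.le (by linarith)
            (Filter.Eventually.of_forall (fun u => hφnn u)) (hInt1 _ _)
        linarith
    -- Fubini step
    set J : ℝ → ℝ := fun s => ∫ θ, F s θ ∂μ₀ with hJdef
    have hJintOn : IntegrableOn J (Set.Ioc 0 t) volume := by
      have := hFint.integral_prod_left
      exact this
    have hJII : IntervalIntegrable J volume 0 t := by
      rw [intervalIntegrable_iff_integrableOn_Ioc_of_le ht]
      exact hJintOn
    have hKbound : (∫ s in (0:ℝ)..t, J s) ≤ δ * (N ^ 2 * t + I) := by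
      rw [intervalIntegral.integral_of_le ht]
      have hswap : (∫ s in Set.Ioc (0:ℝ) t, J s)
          = ∫ θ, (∫ s in Set.Ioc (0:ℝ) t, F s θ) ∂μ₀ :=
        integral_integral_swap hFint
      rw [hswap]
      have hrhs : (∫ θ, Real.exp (-2 * r * θ) * (N ^ 2 * t + I) ∂μ₀)
          = δ * (N ^ 2 * t + I) := by
        rw [MeasureTheory.integral_mul_const, hδ]
      rw [← hrhs]
      refine integral_mono_ae (hFint.integral_prod_right)
        (hδint.mul_const _) ?_
      filter_upwards [hae0] with θ hθ
      exact hinner θ hθ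
    -- pointwise bound
    have hkey : ∀ a b : ℝ, 0 ≤ a → 0 ≤ b →
        (a + b) ^ 2 ≤ (1 + ε) * a ^ 2 + (1 + 1/ε) * b ^ 2 := by
      intro a b ha hb
      rw [← sub_nonneg]
      have : (1 + ε) * a ^ 2 + (1 + 1/ε) * b ^ 2 - (a + b) ^ 2 = (ε * a - b) ^ 2 / ε := by
        field_simp
        ring
      rw [this]
      positivity
    have hptwise : ∀ s ∈ Set.Icc (0:ℝ) t,
        Real.exp (2 * r * s) * ‖X s - G (fun θ => X (s + θ))‖ ^ 2
          ≤ ((1 + ε) + (1 + 1/ε) * α₁) * φ s + ((1 + 1/ε) * α₂) * J s := by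
      intro s _
      set ξ : ℝ → EuclideanSpace ℝ (Fin d) := fun θ => X (s + θ) with hξdef
      have h1 : ‖X s - G ξ‖ ≤ ‖X s‖ + ‖G ξ‖ := norm_sub_le _ _
      have h2 : ‖X s - G ξ‖ ^ 2 ≤ (‖X s‖ + ‖G ξ‖) ^ 2 :=
        pow_le_pow_left₀ (norm_nonneg _) h1 2
      have h3 : ‖X s - G ξ‖ ^ 2 ≤ (1 + ε) * ‖X s‖ ^ 2 + (1 + 1/ε) * ‖G ξ‖ ^ 2 :=
        le_trans h2 (hkey _ _ (norm_nonneg _) (norm_nonneg _))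
      have hGs : ‖G ξ‖ ^ 2 ≤ α₁ * ‖X s‖ ^ 2 + α₂ * ∫ θ, ‖X (s + θ)‖ ^ 2 ∂μ₀ := by
        have := hG ξ
        simpa [hξdef, add_zero] using this
      have hεinv : (0:ℝ) ≤ 1 + 1/ε := by positivity
      have h4 : ‖X s - G ξ‖ ^ 2 ≤ (1 + ε) * ‖X s‖ ^ 2
          + (1 + 1/ε) * (α₁ * ‖X s‖ ^ 2 + α₂ * ∫ θ, ‖X (s + θ)‖ ^ 2 ∂μ₀) := by
        nlinarith [mul_le_mul_of_nonneg_left hGs hεinv]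
      have hJs : J s = Real.exp (2 * r * s) * ∫ θ, ‖X (s + θ)‖ ^ 2 ∂μ₀ := by
        rw [hJdef]
        simp only []
        rw [← MeasureTheory.integral_const_mul]
      have hexp : (0:ℝ) ≤ Real.exp (2 * r * s) := (Real.exp_pos _).le
      have h5 := mul_le_mul_of_nonneg_left h4 hexp
      calc Real.exp (2 * r * s) * ‖X s - G ξ‖ ^ 2
          ≤ Real.exp (2 * r * s) * ((1 + ε) * ‖X s‖ ^ 2
            + (1 + 1/ε) * (α₁ * ‖X s‖ ^ 2 + α₂ * ∫ θ, ‖X (s + θ)‖ ^ 2 ∂μ₀)) := h5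
        _ = ((1 + ε) + (1 + 1/ε) * α₁) * φ s + ((1 + 1/ε) * α₂) * J s := by
            rw [hJs, hφdef]; ring
    -- combine
    have hHint : IntervalIntegrable
        (fun s => ((1 + ε) + (1 + 1/ε) * α₁) * φ s + ((1 + 1/ε) * α₂) * J s) volume 0 t := by
      exact ((hφcont.intervalIntegrable 0 t).const_mul _).add (hJII.const_mul _)
    have hmono : (∫ s in (0:ℝ)..t,
          Real.exp (2 * r * s) * ‖X s - G (fun θ => X (s + θ))‖ ^ 2)
        ≤ ∫ s in (0:ℝ)..t,
          (((1 + ε) + (1 + 1/ε) * α₁) * φ s + ((1 + 1/ε) * α₂) * J s) :=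
      intervalIntegral.integral_mono_on ht hInt hHint hptwise
    have hsplit2 : (∫ s in (0:ℝ)..t,
          (((1 + ε) + (1 + 1/ε) * α₁) * φ s + ((1 + 1/ε) * α₂) * J s))
        = ((1 + ε) + (1 + 1/ε) * α₁) * I + ((1 + 1/ε) * α₂) * ∫ s in (0:ℝ)..t, J s := by
      rw [intervalIntegral.integral_add ((hφcont.intervalIntegrable 0 t).const_mul _)
        (hJII.const_mul _), intervalIntegral.integral_const_mul,
        intervalIntegral.integral_const_mul]
    have hc4nn : (0:ℝ) ≤ (1 + 1/ε) * α₂ := by positivity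
    have hKfinal : ((1 + 1/ε) * α₂) * (∫ s in (0:ℝ)..t, J s)
        ≤ ((1 + 1/ε) * α₂) * (δ * (N ^ 2 * t + I)) :=
      mul_le_mul_of_nonneg_left hKbound hc4nn
    have hident : ((1 + ε) + (1 + 1/ε) * α₁) + ((1 + 1/ε) * α₂) * δ = β₁ := by
      rw [hβ₁]
      have hα₁' : α₁ = ε ^ 2 - α₂ * δ := by linarith [hε2]
      rw [hα₁']
      field_simp
      ring
    calc (∫ s in (0:ℝ)..t,
          Real.exp (2 * r * s) * ‖X s - G (fun θ => X (s + θ))‖ ^ 2)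
        ≤ ((1 + ε) + (1 + 1/ε) * α₁) * I
          + ((1 + 1/ε) * α₂) * ∫ s in (0:ℝ)..t, J s := by
          rw [← hsplit2]; exact hmono
      _ ≤ ((1 + ε) + (1 + 1/ε) * α₁) * I + ((1 + 1/ε) * α₂) * (δ * (N ^ 2 * t + I)) := by
          linarith
      _ = ((1 + 1/ε) * α₂ * δ) * (N ^ 2 * t)
          + (((1 + ε) + (1 + 1/ε) * α₁) + ((1 + 1/ε) * α₂) * δ) * I := by ring
      _ ≤ ((1 + 1/ε) * α₂ * δ + 1) * N ^ 2 * t + β₁ * I := by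
          rw [hident]
          nlinarith [sq_nonneg N]
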